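/- arXiv:1007.3460 — 3 statements merged into one kernel-verified Lean document; each statement's English description precedes it below -/
import Mathlib

section
/- ∫_0^{π/2} ln(2 cos x) / (x² + ln²(2 cos x)) dx = π/4. -/
open Real

open Filter Topology Metric


noncomputable def Fc : ℂ → ℂ :=
  fun z => if z = 0 then 1/2 else (Complex.log (1+z))⁻¹ - z⁻¹

lemma Fc_zero : Fc 0 = 1/2 := by simp [Fc]

lemma Fc_of_ne {z : ℂ} (hz : z ≠ 0) : Fc z = (Complex.log (1+z))⁻¹ - z⁻¹ := by
  simp [Fc, hz]

lemma mem_slit {z : ℂ} (hz : ‖z‖ ≤ 1) (hne : z ≠ -1) : 1 + z ∈ Complex.slitPlane := by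
  rw [Complex.mem_slitPlane_iff]
  by_cases him : z.im = 0
  · left
    simp only [Complex.add_re, Complex.one_re]
    rcases lt_or_ge (-1) z.re with h | h
    · linarith
    · exfalso
      apply hne
      have habs : |z.re| ≤ 1 := by
        calc |z.re| ≤ ‖z‖ := Complex.abs_re_le_norm z
        _ ≤ 1 := hz
      have hre : z.re = -1 := le_antisymm h (by cases abs_le.mp habs; linarith)
      refine Complex.ext hre ?_
      simpa using him
  · right
    simpa using him

lemma log_ne {z : ℂ} (h0 : z ≠ 0) (h1 : (1:ℂ) + z ≠ 0) : Complex.log (1+z) ≠ 0 := by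
  intro h
  have := Complex.exp_log h1
  rw [h, Complex.exp_zero] at this
  apply h0
  have : z + 1 = 0 + 1 := by rw [zero_add]; linear_combination -this
  exact add_right_cancel this

-- logTaylor 3
lemma logTaylor_three (z : ℂ) : Complex.logTaylor 3 z = z - z^2/2 := by
  simp [Complex.logTaylor, Finset.sum_range_succ]
  ring

lemma norm_second_order {z : ℂ} (hz : ‖z‖ < 1) :
    ‖Complex.log (1+z) - (z - z^2/2)‖ ≤ ‖z‖^3 * (1-‖z‖)⁻¹ / 3 := by
  have := Complex.norm_log_sub_logTaylor_le 2 hz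
  rw [logTaylor_three] at this
  norm_num at this ⊢
  exact this

lemma tendsto_A :
    Tendsto (fun z : ℂ => (z - Complex.log (1+z)) / z^2) (𝓝[≠] (0:ℂ)) (𝓝 (1/2)) := by
  have key : Tendsto (fun z : ℂ => (z - Complex.log (1+z)) / z^2 - 1/2) (𝓝[≠] (0:ℂ)) (𝓝 0) := by
    apply squeeze_zero_norm' (a := fun z : ℂ => ‖z‖)
    · have hev : ∀ᶠ z : ℂ in 𝓝[≠] (0:ℂ), ‖z‖ < 1/2 ∧ z ≠ 0 := by
        filter_upwards [inter_mem_nhdsWithin {z : ℂ | z ≠ 0} (Metric.ball_mem_nhds (0:ℂ) (by norm_num : (0:ℝ) < 1/2))] with z hz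
        refine ⟨?_, hz.1⟩
        simpa [dist_eq_norm] using hz.2
      filter_upwards [hev] with z hz
      obtain ⟨hlt, hne⟩ := hz
      have hz1 : ‖z‖ < 1 := by linarith
      have hzsq : z^2 ≠ 0 := pow_ne_zero _ hne
      have heq : (z - Complex.log (1+z)) / z^2 - 1/2
          = -((Complex.log (1+z) - (z - z^2/2)) / z^2) := by
        field_simp
        ring
      rw [heq, norm_neg, norm_div, norm_pow]
      rw [div_le_iff₀ (pow_pos (norm_pos_iff.mpr hne) 2)]
      calc ‖Complex.log (1+z) - (z - z^2/2)‖ ≤ ‖z‖^3 * (1-‖z‖)⁻¹ / 3 := norm_second_order hz1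
        _ ≤ ‖z‖ * ‖z‖^2 := by
            rw [pow_succ, mul_comm (‖z‖^2) ‖z‖]
            rw [div_le_iff₀ (by norm_num : (0:ℝ) < 3)]
            have h1 : (1-‖z‖)⁻¹ ≤ 2 := by
              rw [inv_le_comm₀ (by linarith) (by norm_num)]
              linarith
            have ha : (0:ℝ) ≤ ‖z‖ * ‖z‖^2 := by positivity
            nlinarith [mul_le_mul_of_nonneg_left h1 ha]
    · have : Tendsto (fun z : ℂ => ‖z‖) (𝓝 (0:ℂ)) (𝓝 0) := by
        simpa using (continuous_norm.tendsto (0:ℂ))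
      exact this.mono_left nhdsWithin_le_nhds
  have := key.add (tendsto_const_nhds (x := (1/2 : ℂ)))
  simpa using this

lemma tendsto_B :
    Tendsto (fun z : ℂ => z⁻¹ * Complex.log (1+z)) (𝓝[≠] (0:ℂ)) (𝓝 1) := by
  have hd : HasDerivAt (fun z : ℂ => Complex.log (1+z)) 1 0 := by
    have h := (Complex.hasDerivAt_log (by simp [Complex.slitPlane] :
      ((1:ℂ) + 0) ∈ Complex.slitPlane)).comp_const_add 1 0
    simpa using h
  have := hasDerivAt_iff_tendsto_slope.mp hd
  refine this.congr fun z => ?_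
  simp [slope_def_field, div_eq_inv_mul]

lemma tendsto_Fc_zero :
    Tendsto (fun z : ℂ => (Complex.log (1+z))⁻¹ - z⁻¹) (𝓝[≠] (0:ℂ)) (𝓝 (1/2)) := by
  have hAB : Tendsto (fun z : ℂ => ((z - Complex.log (1+z)) / z^2) * (z⁻¹ * Complex.log (1+z))⁻¹)
      (𝓝[≠] (0:ℂ)) (𝓝 (1/2)) := by
    simpa using tendsto_A.mul (tendsto_B.inv₀ one_ne_zero)
  refine hAB.congr' ?_
  have hev : ∀ᶠ z : ℂ in 𝓝[≠] (0:ℂ), ‖z‖ < 1/2 ∧ z ≠ 0 := by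
    filter_upwards [inter_mem_nhdsWithin {z : ℂ | z ≠ 0} (Metric.ball_mem_nhds (0:ℂ) (by norm_num : (0:ℝ) < 1/2))] with z hz
    refine ⟨?_, hz.1⟩
    simpa [dist_eq_norm] using hz.2
  filter_upwards [hev] with z hz
  obtain ⟨hlt, hne⟩ := hz
  have h1 : (1:ℂ) + z ≠ 0 := by
    intro h
    have : ‖z‖ = 1 := by
      have : z = -1 := by linear_combination h
      simp [this]
    linarith
  have hlog : Complex.log (1+z) ≠ 0 := by
    intro h
    have := Complex.exp_log h1
    rw [h, Complex.exp_zero] at this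
    exact hne (by linear_combination -this)
  field_simp

lemma contAt_Fc_zero : ContinuousAt Fc 0 := by
  rw [ContinuousAt, Fc_zero, ← nhdsNE_sup_pure (0:ℂ), Filter.tendsto_sup]
  constructor
  · refine tendsto_Fc_zero.congr' ?_
    filter_upwards [self_mem_nhdsWithin] with z hz
    exact (Fc_of_ne hz).symm
  · simpa [Fc_zero] using tendsto_pure_nhds Fc (0:ℂ)

lemma tendsto_inv_log_neg_one {s : Set ℂ} :
    Tendsto (fun z : ℂ => (Complex.log (1+z))⁻¹) (𝓝[s \ {-1}] (-1)) (𝓝 0) := by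
  apply squeeze_zero_norm' (a := fun z : ℂ => (-(Real.log ‖1+z‖))⁻¹)
  · have hev : ∀ᶠ z : ℂ in 𝓝[s \ {-1}] (-1), ‖1+z‖ < 1 ∧ z ≠ -1 := by
      filter_upwards [inter_mem_nhdsWithin (s \ {-1}) (Metric.ball_mem_nhds (-1:ℂ) one_pos),
        self_mem_nhdsWithin] with z hz hz'
      refine ⟨?_, fun h => hz'.2 (by simp [h])⟩
      have := hz.2
      rw [Metric.mem_ball, dist_eq_norm] at this
      rw [show (1:ℂ) + z = z - (-1) by ring]
      exact this
    filter_upwards [hev] with z hz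
    obtain ⟨hlt, hne⟩ := hz
    have h1 : (1:ℂ) + z ≠ 0 := fun h => hne (by linear_combination h)
    have hpos : 0 < ‖(1:ℂ)+z‖ := norm_pos_iff.mpr h1
    have hlog_neg : Real.log ‖(1:ℂ)+z‖ < 0 := Real.log_neg hpos hlt
    have hge : -(Real.log ‖(1:ℂ)+z‖) ≤ ‖Complex.log (1+z)‖ := by
      calc -(Real.log ‖(1:ℂ)+z‖) ≤ |Real.log ‖(1:ℂ)+z‖| := neg_le_abs _
        _ = |(Complex.log (1+z)).re| := by
            rw [Complex.log_re]
        _ ≤ ‖Complex.log (1+z)‖ := Complex.abs_re_le_norm _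
        _ = ‖Complex.log (1+z)‖ := rfl
    rw [norm_inv]
    exact inv_anti₀ (by linarith) hge
  · have h1 : Tendsto (fun z : ℂ => ‖1+z‖) (𝓝[s \ {-1}] (-1)) (𝓝[≠] 0) := by
      rw [tendsto_nhdsWithin_iff]
      constructor
      · have : Tendsto (fun z : ℂ => ‖1+z‖) (𝓝 (-1:ℂ)) (𝓝 ‖(1:ℂ)+(-1)‖) :=
          ((continuous_const.add continuous_id).norm).tendsto (-1)
        simpa using this.mono_left nhdsWithin_le_nhds
      · filter_upwards [self_mem_nhdsWithin] with z hz
        have hne : z ≠ -1 := fun h => hz.2 (by simp [h])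
        have h1 : (1:ℂ) + z ≠ 0 := fun h => hne (by linear_combination h)
        simpa using norm_ne_zero_iff.mpr h1
    have h2 : Tendsto (fun z : ℂ => Real.log ‖1+z‖) (𝓝[s \ {-1}] (-1)) atBot :=
      Real.tendsto_log_nhdsNE_zero.comp h1
    have h3 : Tendsto (fun z : ℂ => -(Real.log ‖1+z‖)) (𝓝[s \ {-1}] (-1)) atTop :=
      tendsto_neg_atBot_atTop.comp h2
    exact tendsto_inv_atTop_zero.comp h3

lemma contFc : ContinuousOn Fc (Metric.closedBall 0 1) := by
  intro z hz
  rw [Metric.mem_closedBall, dist_eq_norm, sub_zero] at hz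
  rcases eq_or_ne z 0 with rfl | h0
  · exact contAt_Fc_zero.continuousWithinAt
  rcases eq_or_ne z (-1) with rfl | h1
  · rw [← continuousWithinAt_diff_self]
    rw [ContinuousWithinAt]
    have hFcneg : Fc (-1) = 1 := by
      norm_num [Fc, Complex.log_zero]
    rw [hFcneg]
    have hinv : Tendsto (fun z : ℂ => z⁻¹) (𝓝[Metric.closedBall 0 1 \ {-1}] (-1)) (𝓝 (-1)) := by
      have : Tendsto (fun z : ℂ => z⁻¹) (𝓝 (-1:ℂ)) (𝓝 ((-1:ℂ)⁻¹)) :=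
        (continuousAt_inv₀ (by norm_num)).tendsto
      simpa [inv_neg] using this.mono_left nhdsWithin_le_nhds
    have := tendsto_inv_log_neg_one (s := Metric.closedBall 0 1) |>.sub hinv
    rw [zero_sub, neg_neg] at this
    refine this.congr' ?_
    filter_upwards [inter_mem_nhdsWithin (Metric.closedBall 0 1 \ {-1})
      (Metric.ball_mem_nhds (-1:ℂ) (by norm_num : (0:ℝ) < 1/2))] with w hw
    have hwne : w ≠ 0 := by
      intro h
      have := hw.2
      rw [h, Metric.mem_ball] at this
      norm_num at this
    exact (Fc_of_ne hwne).symm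
  · -- z ≠ 0, z ≠ -1
    apply ContinuousAt.continuousWithinAt
    have hne0 : (1:ℂ) + z ≠ 0 := fun h => h1 (by linear_combination h)
    have hg : ContinuousAt (fun w : ℂ => (Complex.log (1+w))⁻¹ - w⁻¹) z := by
      have hc1 : ContinuousAt (fun w : ℂ => Complex.log (1+w)) z :=
        (continuousAt_clog (mem_slit hz h1)).comp
          ((continuous_const.add continuous_id).continuousAt)
      exact (hc1.inv₀ (log_ne h0 hne0)).sub (continuousAt_inv₀ h0)
    refine hg.congr ?_
    filter_upwards [isOpen_ne.mem_nhds h0] with w hw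
    exact (Fc_of_ne hw).symm

lemma diffFc : ∀ z ∈ Metric.ball (0:ℂ) 1 \ {(0:ℂ)}, DifferentiableAt ℂ Fc z := by
  rintro z ⟨hz, h0⟩
  rw [Metric.mem_ball, dist_eq_norm, sub_zero] at hz
  simp only [Set.mem_singleton_iff] at h0
  have h1 : z ≠ -1 := by
    intro h
    rw [h] at hz
    norm_num at hz
  have hne0 : (1:ℂ) + z ≠ 0 := fun h => h1 (by linear_combination h)
  have hg : DifferentiableAt ℂ (fun w : ℂ => (Complex.log (1+w))⁻¹ - w⁻¹) z := by
    have hd1 : DifferentiableAt ℂ (fun w : ℂ => Complex.log (1+w)) z :=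
      (Complex.differentiableAt_log (mem_slit hz.le h1)).comp z
        ((differentiable_const _).add differentiable_id).differentiableAt
    exact (hd1.inv (log_ne h0 hne0)).sub (differentiableAt_id.inv h0)
  refine hg.congr_of_eventuallyEq ?_
  filter_upwards [isOpen_ne.mem_nhds h0] with w hw
  exact Fc_of_ne hw

lemma cont_Fc_circle : Continuous fun θ : ℝ => Fc (circleMap 0 1 θ) := by
  refine contFc.comp_continuous (continuous_circleMap 0 1) fun θ => ?_
  rw [Metric.mem_closedBall, dist_eq_norm, sub_zero]
  have : ‖circleMap 0 1 θ‖ = 1 := by rw [norm_circleMap_zero]; norm_num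
  simp [this]

lemma integral_Fc_circle :
    (∫ θ in (0:ℝ)..2*π, Fc (circleMap 0 1 θ)) = (π : ℂ) := by
  have h := Complex.circleIntegral_sub_inv_smul_of_differentiable_on_off_countable
    (Set.countable_singleton (0:ℂ)) (Metric.mem_ball_self one_pos) contFc diffFc
  rw [circleIntegral] at h
  have hI : ∀ θ : ℝ, deriv (circleMap 0 1) θ • ((circleMap 0 1 θ - 0)⁻¹ • Fc (circleMap 0 1 θ))
      = Complex.I * Fc (circleMap 0 1 θ) := by
    intro θ
    rw [deriv_circleMap]
    have hne : circleMap 0 1 θ ≠ 0 := circleMap_ne_center one_ne_zero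
    field_simp [smul_eq_mul]
    rw [smul_eq_mul, smul_eq_mul, sub_zero, one_div, mul_comm (circleMap 0 1 θ) Complex.I, mul_assoc,
      ← mul_assoc (circleMap 0 1 θ), mul_inv_cancel₀ hne, one_mul]
  rw [intervalIntegral.integral_congr (fun θ _ => hI θ)] at h
  rw [intervalIntegral.integral_const_mul] at h
  rw [Fc_zero] at h
  have h2 : (2 * ↑π * Complex.I : ℂ) • ((1:ℂ)/2) = Complex.I * ↑π := by
    rw [smul_eq_mul]; ring
  rw [h2] at h
  exact mul_left_cancel₀ Complex.I_ne_zero h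

lemma integral_Fc_re :
    (∫ θ in (0:ℝ)..2*π, (Fc (circleMap 0 1 θ)).re) = π := by
  have h := Complex.reCLM.intervalIntegral_comp_comm
    (cont_Fc_circle.intervalIntegrable (μ := MeasureTheory.volume) 0 (2*π))
  simp only [Complex.reCLM_apply] at h
  rw [h, integral_Fc_circle, Complex.ofReal_re]

noncomputable def v : ℝ → ℝ := fun θ => (Fc (circleMap 0 1 θ)).re + Real.cos θ

lemma cont_v : Continuous v := (Complex.continuous_re.comp cont_Fc_circle).add Real.continuous_cos

lemma v_eq (θ : ℝ) : v θ = ((Complex.log (1 + Complex.exp (θ * Complex.I)))⁻¹).re := by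
  have hne : circleMap 0 1 θ ≠ 0 := circleMap_ne_center one_ne_zero
  have hcm : circleMap 0 1 θ = Complex.exp (θ * Complex.I) := by simp [circleMap]
  rw [v, Fc_of_ne hne, hcm]
  have hinv : (Complex.exp (↑θ * Complex.I))⁻¹ = Complex.exp (↑(-θ) * Complex.I) := by
    rw [← Complex.exp_neg]; push_cast; ring_nf
  rw [Complex.sub_re, hinv, Complex.exp_ofReal_mul_I_re, Real.cos_neg]
  ring

lemma integral_v : (∫ θ in (0:ℝ)..2*π, v θ) = π := by
  have h : (∫ θ in (0:ℝ)..2*π, v θ)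
      = (∫ θ in (0:ℝ)..2*π, (Fc (circleMap 0 1 θ)).re) + ∫ θ in (0:ℝ)..2*π, Real.cos θ := by
    exact intervalIntegral.integral_add
      ((Complex.continuous_re.comp cont_Fc_circle).intervalIntegrable 0 (2*π))
      (Real.continuous_cos.intervalIntegrable 0 (2*π))
  rw [h, integral_Fc_re, integral_cos, Real.sin_two_pi, Real.sin_zero]
  ring

lemma v_symm (θ : ℝ) : v (2*π - θ) = v θ := by
  rw [v_eq, v_eq]
  have hexp : Complex.exp (↑(2*π - θ) * Complex.I) = starRingEnd ℂ (Complex.exp (↑θ * Complex.I)) := by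
    have h1 : (↑(2*π - θ):ℂ) * Complex.I = 2*↑π*Complex.I + ↑(-θ)*Complex.I := by push_cast; ring
    rw [h1, Complex.exp_add, Complex.exp_two_pi_mul_I, one_mul, ← Complex.exp_conj]
    congr 1
    simp [Complex.conj_I]
  rw [hexp, show (1:ℂ) + starRingEnd ℂ (Complex.exp (↑θ * Complex.I))
      = starRingEnd ℂ (1 + Complex.exp (↑θ * Complex.I)) by rw [map_add, map_one]]
  set x := 1 + Complex.exp (↑θ * Complex.I) with hx
  have harg : x.arg ≠ π := by
    rcases eq_or_ne x 0 with h | h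
    · rw [h, Complex.arg_zero]
      exact fun hpi => Real.pi_ne_zero hpi.symm
    · have hre : 0 ≤ x.re := by
        rw [hx, Complex.add_re, Complex.one_re, Complex.exp_ofReal_mul_I_re]
        nlinarith [Real.neg_one_le_cos θ]
      have habs := Complex.abs_arg_le_pi_div_two_iff.mpr hre
      intro hpi
      rw [hpi] at habs
      have hp := Real.pi_pos
      rw [abs_of_pos hp] at habs
      linarith
  rw [Complex.log_conj _ harg, ← map_inv₀, Complex.conj_re]

lemma integral_v_half : (∫ θ in (0:ℝ)..π, v θ) = π/2 := by
  have hsplit : (∫ θ in (0:ℝ)..2*π, v θ)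
      = (∫ θ in (0:ℝ)..π, v θ) + ∫ θ in π..2*π, v θ :=
    (intervalIntegral.integral_add_adjacent_intervals
      (cont_v.intervalIntegrable 0 π) (cont_v.intervalIntegrable π (2*π))).symm
  have hrefl : (∫ θ in π..2*π, v θ) = ∫ θ in (0:ℝ)..π, v θ := by
    have h := intervalIntegral.integral_comp_sub_left (a := 0) (b := π) v (2*π)
    rw [intervalIntegral.integral_congr (g := v) (fun x _ => v_symm x)] at h
    rw [show 2*π - π = π by ring, show 2*π - 0 = 2*π by ring] at h
    exact h.symm
  rw [hrefl, integral_v] at hsplit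
  linarith

lemma v_two_mul {x : ℝ} (hx : x ∈ Set.Icc 0 (π/2)) :
    Real.log (2 * Real.cos x) / (x ^ 2 + Real.log (2 * Real.cos x) ^ 2) = v (2*x) := by
  rw [v_eq]
  rcases hx.2.eq_or_lt with heq | hlt
  · rw [heq]
    have h1 : (↑(2*(π/2)) : ℂ) * Complex.I = ↑π * Complex.I := by push_cast; ring
    rw [h1, Complex.exp_pi_mul_I]
    norm_num [Real.cos_pi_div_two, Real.log_zero, Complex.log_zero]
  · have hcos : 0 < Real.cos x := Real.cos_pos_of_mem_Ioo ⟨by linarith [hx.1, Real.pi_pos], hlt⟩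
    have hrpos : 0 < 2 * Real.cos x := by positivity
    have hexp : (1:ℂ) + Complex.exp (↑(2*x) * Complex.I)
        = ↑(2 * Real.cos x) * Complex.exp (↑x * Complex.I) := by
      have h1 : (↑(2*x):ℂ) * Complex.I = ↑x*Complex.I + ↑x*Complex.I := by push_cast; ring
      have hone : Complex.exp (-↑x*Complex.I) * Complex.exp (↑x*Complex.I) = 1 := by
        rw [← Complex.exp_add]
        ring_nf
        exact Complex.exp_zero
      rw [h1, Complex.exp_add]
      push_cast
      rw [Complex.cos]
      linear_combination -hone
    have hlog : Complex.log (1 + Complex.exp (↑(2*x) * Complex.I))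
        = ↑(Real.log (2 * Real.cos x)) + ↑x * Complex.I := by
      rw [hexp]
      refine Complex.ext ?_ ?_
      · rw [Complex.log_re, norm_mul, Complex.norm_of_nonneg hrpos.le, Complex.norm_exp_ofReal_mul_I,
          mul_one]
        simp
      · rw [Complex.log_im, Complex.arg_real_mul _ hrpos, Complex.exp_mul_I,
          Complex.arg_cos_add_sin_mul_I ⟨by linarith [Real.pi_pos, hx.1], by linarith [Real.pi_pos]⟩]
        simp
    rw [hlog, Complex.inv_re]
    have hre : ((↑(Real.log (2 * Real.cos x)) + ↑x * Complex.I : ℂ)).re = Real.log (2 * Real.cos x) := by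
      simp
    have him : ((↑(Real.log (2 * Real.cos x)) + ↑x * Complex.I : ℂ)).im = x := by
      simp
    rw [Complex.normSq_apply, hre, him]
    congr 1
    ring

/-- `∫_0^{π/2} ln(2 cos x) / (x² + ln²(2 cos x)) dx = π/4`. -/
theorem integral_log_two_cos_div :
    ∫ x in (0:ℝ)..(π/2),
        Real.log (2 * Real.cos x) / (x ^ 2 + Real.log (2 * Real.cos x) ^ 2)
    = π / 4 := by
  have hpi := Real.pi_pos
  have hcongr : (∫ x in (0:ℝ)..(π/2),
      Real.log (2 * Real.cos x) / (x ^ 2 + Real.log (2 * Real.cos x) ^ 2))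
      = ∫ x in (0:ℝ)..(π/2), v (2*x) := by
    refine intervalIntegral.integral_congr fun x hx => ?_
    rw [Set.uIcc_of_le (by linarith : (0:ℝ) ≤ π/2)] at hx
    exact v_two_mul hx
  rw [hcongr]
  have h2 : (∫ x in (0:ℝ)..π/2, v (2*x)) = (2:ℝ)⁻¹ • ∫ x in (0:ℝ)..π, v x := by
    have := intervalIntegral.integral_comp_mul_left (a := 0) (b := π/2) (c := 2) v two_ne_zero
    rw [this, show 2*(π/2) = π by ring, show 2*(0:ℝ) = 0 by ring]
  rw [h2, integral_v_half, smul_eq_mul]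
  ring
end

section
/- ∫_0^{π/2} 1/(x² + ln²(2 cos x)) dx − 2 · ∫_0^{π/2} x² / (x² + ln²(2 cos x))² dx = π/24. -/
open Real

namespace PC247

open Filter Set MeasureTheory Metric Topology intervalIntegral

noncomputable def ffun : ℂ → ℂ := fun z => ((Complex.log (1+z))^2)⁻¹ - (z^2)⁻¹ - z⁻¹

noncomputable def hfun : ℂ → ℂ := Function.update ffun 0 (1/12)

noncomputable def rfun : ℝ → ℝ :=
  fun θ => (hfun (Complex.exp (θ * Complex.I))).re + Real.cos θ + Real.cos (2*θ)

lemma log_ne {z : ℂ} (h0 : z ≠ 0) (h1 : (1:ℂ) + z ≠ 0) : Complex.log (1+z) ≠ 0 := by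
  intro h
  have h2 := Complex.exp_log h1
  rw [h, Complex.exp_zero] at h2
  exact h0 (by linear_combination -h2)

lemma logTaylor_four (z : ℂ) : Complex.logTaylor 4 z = z - z^2/2 + z^3/3 := by
  simp [Complex.logTaylor, Finset.sum_range_succ]
  ring


lemma ev_small : ∀ᶠ z : ℂ in 𝓝[≠] 0, ‖z‖ < 1/2 ∧ z ≠ 0 := by
  have h1 : ∀ᶠ z : ℂ in 𝓝 0, ‖z‖ < 1/2 := by
    have := Metric.ball_mem_nhds (0:ℂ) (by norm_num : (0:ℝ) < 1/2)
    filter_upwards [this] with z hz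
    simpa [dist_zero_right] using hz
  filter_upwards [h1.filter_mono nhdsWithin_le_nhds, self_mem_nhdsWithin] with z h hz
  exact ⟨h, hz⟩

lemma bound_tendsto (c : ℝ) :
    Tendsto (fun z : ℂ => ‖z‖ * (1 - ‖z‖)⁻¹ / c) (𝓝 0) (𝓝 0) := by
  have h1 : ContinuousAt (fun z : ℂ => ‖z‖ * (1 - ‖z‖)⁻¹ / c) 0 :=
    (continuous_norm.continuousAt.mul
      ((continuous_const.sub continuous_norm).continuousAt.inv₀ (by simp))).div_const _
  simpa using h1.tendsto

lemma tendsto_ufun : Tendsto (fun z : ℂ => Complex.log (1+z)/z) (𝓝[≠] 0) (𝓝 1) := by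
  rw [← tendsto_sub_nhds_zero_iff]
  apply squeeze_zero_norm' (a := fun z : ℂ => ‖z‖ * (1 - ‖z‖)⁻¹ / 2)
  · filter_upwards [ev_small] with z hz
    obtain ⟨h12, h0⟩ := hz
    have h1 : ‖z‖ < 1 := by linarith
    have key : Complex.log (1+z)/z - 1 = (Complex.log (1+z) - z)/z := by
      field_simp
    have hzpos : (0:ℝ) < ‖z‖ := norm_pos_iff.mpr h0
    rw [key, norm_div, div_le_iff₀ hzpos]
    calc ‖Complex.log (1+z) - z‖ ≤ ‖z‖^2 * (1 - ‖z‖)⁻¹ / 2 :=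
          Complex.norm_log_one_add_sub_self_le h1
      _ = ‖z‖ * (1 - ‖z‖)⁻¹ / 2 * ‖z‖ := by ring
  · exact (bound_tendsto 2).mono_left nhdsWithin_le_nhds

lemma tendsto_sfun :
    Tendsto (fun z : ℂ => (Complex.log (1+z) - z + z^2/2)/z^3) (𝓝[≠] 0) (𝓝 (1/3)) := by
  rw [show ((1:ℂ)/3) = 1/3 from rfl, ← tendsto_sub_nhds_zero_iff]
  apply squeeze_zero_norm' (a := fun z : ℂ => ‖z‖ * (1 - ‖z‖)⁻¹ / 4)
  · filter_upwards [ev_small] with z hz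
    obtain ⟨h12, h0⟩ := hz
    have h1 : ‖z‖ < 1 := by linarith
    have key : (Complex.log (1+z) - z + z^2/2)/z^3 - 1/3
        = (Complex.log (1+z) - Complex.logTaylor 4 z)/z^3 := by
      rw [logTaylor_four]
      field_simp
      ring
    have hzpos : (0:ℝ) < ‖z‖ := norm_pos_iff.mpr h0
    rw [key, norm_div, norm_pow, div_le_iff₀ (by positivity)]
    have hb := Complex.norm_log_sub_logTaylor_le 3 h1
    calc ‖Complex.log (1+z) - Complex.logTaylor 4 z‖
        ≤ ‖z‖^(3+1) * (1 - ‖z‖)⁻¹ / (3+1) := by exact_mod_cast hb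
      _ = ‖z‖ * (1 - ‖z‖)⁻¹ / 4 * ‖z‖^3 := by ring
  · exact (bound_tendsto 4).mono_left nhdsWithin_le_nhds

lemma alg_identity {z s l : ℂ} (h0 : z ≠ 0) (hl : l ≠ 0) (hld : l = s*z^3 + z - z^2/2) :
    ((3/4 - 2*s) - z*(s + 1/4) - z^2*(s^2 - s) - z^3*s^2) / (l/z)^2
    = (l^2)⁻¹ - (z^2)⁻¹ - z⁻¹ := by
  have hl2 : l^2 ≠ 0 := pow_ne_zero _ hl
  have hz2 : z^2 ≠ 0 := pow_ne_zero _ h0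
  have e1 : (l^2)⁻¹ - (z^2)⁻¹ - z⁻¹ = (z^3 - z*l^2 - z^2*l^2)/(z^3*l^2) := by
    field_simp
  have e2 : ((3/4 - 2*s) - z*(s + 1/4) - z^2*(s^2 - s) - z^3*s^2) / (l/z)^2
      = ((3/4 - 2*s) - z*(s + 1/4) - z^2*(s^2 - s) - z^3*s^2) * z^2 / l^2 := by
    rw [div_pow, div_div_eq_mul_div]
  rw [e1, e2, div_eq_div_iff hl2 (mul_ne_zero (pow_ne_zero _ h0) hl2)]
  subst hld
  ring

set_option maxHeartbeats 1000000 in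
lemma tendsto_ffun : Tendsto ffun (𝓝[≠] (0:ℂ)) (𝓝 (1/12)) := by
  have hS := tendsto_sfun
  have hU := tendsto_ufun
  set S : ℂ → ℂ := fun z => (Complex.log (1+z) - z + z^2/2)/z^3 with hSdef
  set U : ℂ → ℂ := fun z => Complex.log (1+z)/z with hUdef
  have hz0 : Tendsto (fun z : ℂ => z) (𝓝[≠] 0) (𝓝 0) := tendsto_id.mono_left nhdsWithin_le_nhds
  have hpair : Tendsto (fun z : ℂ => (z, S z)) (𝓝[≠] 0) (𝓝 (0, 1/3)) := hz0.prodMk_nhds hS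
  have hψ : Continuous (fun p : ℂ × ℂ =>
      (3/4 - 2*p.2) - p.1*(p.2 + 1/4) - p.1^2*(p.2^2 - p.2) - p.1^3*p.2^2) := by fun_prop
  have hnum : Tendsto
      (fun z : ℂ => (3/4 - 2*S z) - z*(S z + 1/4) - z^2*((S z)^2 - S z) - z^3*(S z)^2)
      (𝓝[≠] 0) (𝓝 (1/12)) := by
    have h2 := (hψ.tendsto (0, 1/3)).comp hpair
    simp only [Function.comp_def] at h2
    convert h2 using 2
    norm_num
  have hden : Tendsto (fun z : ℂ => (U z)^2) (𝓝[≠] 0) (𝓝 1) := by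
    simpa using hU.pow 2
  have hdiv := hnum.div hden (by norm_num : (1:ℂ) ≠ 0)
  rw [div_one] at hdiv
  apply hdiv.congr'
  filter_upwards [ev_small] with z hz
  obtain ⟨h12, h0⟩ := hz
  have h1z : (1:ℂ) + z ≠ 0 := by
    intro h
    have : z = -1 := by linear_combination h
    rw [this] at h12
    norm_num at h12
  have hl : Complex.log (1+z) ≠ 0 := log_ne h0 h1z
  have hld : Complex.log (1+z) = (S z)*z^3 + z - z^2/2 := by
    simp only [hSdef]
    rw [div_mul_cancel₀ _ (pow_ne_zero 3 h0)]
    ring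
  simp only [Pi.div_apply, hUdef, ffun]
  exact alg_identity h0 hl hld

lemma slit {z : ℂ} (h : ‖z‖ < 1) : 1 + z ∈ Complex.slitPlane := by
  rw [Complex.mem_slitPlane_iff]
  left
  have h1 : |z.re| ≤ ‖z‖ := by
    exact Complex.abs_re_le_norm z
  have := abs_le.1 h1
  simp only [Complex.add_re, Complex.one_re]
  linarith [this.1]

lemma ffun_diffAt {z : ℂ} (h0 : z ≠ 0) (hs : 1 + z ∈ Complex.slitPlane) :
    DifferentiableAt ℂ ffun z := by
  have h1z : (1:ℂ) + z ≠ 0 := Complex.slitPlane_ne_zero hs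
  have hl : Complex.log (1+z) ≠ 0 := log_ne h0 h1z
  have hlog : DifferentiableAt ℂ (fun w : ℂ => Complex.log (1+w)) z :=
    ((differentiableAt_const _).add differentiableAt_id).clog hs
  exact (((hlog.pow 2).inv (pow_ne_zero 2 hl)).sub
    ((differentiableAt_id.pow 2).inv (pow_ne_zero 2 h0))).sub (differentiableAt_id.inv h0)

lemma hfun_eventuallyEq {z : ℂ} (h0 : z ≠ 0) : hfun =ᶠ[𝓝 z] ffun := by
  filter_upwards [isOpen_compl_singleton.mem_nhds
    (by simpa using h0 : z ∈ ({0}ᶜ : Set ℂ))] with w hw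
  exact Function.update_of_ne hw _ _

lemma norm_one_twelve : ‖(1/12 : ℂ)‖ = 1/12 := by
  rw [show (1/12 : ℂ) = ((1/12 : ℝ) : ℂ) by norm_num, Complex.norm_real, Real.norm_eq_abs]
  norm_num

lemma hfun_diffOn : DifferentiableOn ℂ hfun (Metric.ball 0 1) := by
  intro z hz
  rcases eq_or_ne z 0 with rfl | h0
  · -- removable singularity at 0
    have hev : ∀ᶠ w in 𝓝[≠] (0:ℂ), ‖ffun w‖ ≤ 1 := by
      apply (tendsto_ffun.norm).eventually_le_const
      rw [norm_one_twelve]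
      norm_num
    rw [eventually_nhdsWithin_iff, Metric.eventually_nhds_iff] at hev
    obtain ⟨δ, hδpos, hδ⟩ := hev
    set ε := min δ 1 with hε
    have hεpos : 0 < ε := lt_min hδpos one_pos
    have hεle : ε ≤ 1 := min_le_right _ _
    have hd : DifferentiableOn ℂ ffun (Metric.ball (0:ℂ) ε \ {0}) := by
      intro w hw
      have hw1 : ‖w‖ < 1 := lt_of_lt_of_le (by simpa [mem_ball_zero_iff] using hw.1) hεle
      exact (ffun_diffAt hw.2 (slit hw1)).differentiableWithinAt
    have hb : BddAbove (norm ∘ ffun '' (Metric.ball (0:ℂ) ε \ {0})) := by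
      refine ⟨1, ?_⟩
      rintro y ⟨w, ⟨hw1, hw2⟩, rfl⟩
      have hd1 : dist w 0 < δ := lt_of_lt_of_le (Metric.mem_ball.1 hw1) (min_le_left _ _)
      exact hδ hd1 hw2
    have hrem := Complex.differentiableOn_update_limUnder_of_bddAbove
      (Metric.ball_mem_nhds (0:ℂ) hεpos) hd hb
    rw [tendsto_ffun.limUnder_eq] at hrem
    exact ((hrem.differentiableAt (Metric.ball_mem_nhds _ hεpos)).differentiableWithinAt)
  · have h1 : ‖z‖ < 1 := mem_ball_zero_iff.1 hz
    exact ((ffun_diffAt h0 (slit h1)).congr_of_eventuallyEq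
      (hfun_eventuallyEq h0)).differentiableWithinAt

lemma hfun_at_neg_one : hfun (-1) = 0 := by
  rw [hfun, Function.update_of_ne (by norm_num : (-1:ℂ) ≠ 0), ffun]
  norm_num [Complex.log_zero]

lemma hfun_contOn : ContinuousOn hfun (Metric.closedBall 0 1) := by
  intro z hz
  rcases eq_or_ne z 0 with rfl | h0
  · exact ((hfun_diffOn.differentiableAt
      (Metric.ball_mem_nhds _ one_pos)).continuousAt).continuousWithinAt
  rcases eq_or_ne z (-1) with rfl | hm1
  · -- continuity at -1
    rw [← continuousWithinAt_diff_self]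
    have hval : hfun (-1) = 0 := hfun_at_neg_one
    set F := 𝓝[Metric.closedBall (0:ℂ) 1 \ {-1}] (-1)
    have hev1 : ∀ᶠ w in F, w ≠ -1 := by
      filter_upwards [self_mem_nhdsWithin] with w hw
      simpa using hw.2
    have hevne : ∀ᶠ w in F, w ≠ 0 := by
      have : ∀ᶠ w in 𝓝 (-1:ℂ), w ≠ 0 :=
        isOpen_compl_singleton.eventually_mem (by norm_num)
      exact this.filter_mono nhdsWithin_le_nhds
    have habs : Tendsto (fun w : ℂ => ‖1+w‖) F (𝓝[>] 0) := by
      rw [tendsto_nhdsWithin_iff]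
      constructor
      · have hc : ContinuousAt (fun w : ℂ => ‖1+w‖) (-1) :=
          continuous_norm.continuousAt.comp (continuous_const.add continuous_id).continuousAt
        have := hc.tendsto.mono_left (nhdsWithin_le_nhds (s := Metric.closedBall (0:ℂ) 1 \ {-1}))
        simpa using this
      · filter_upwards [hev1] with w hw
        have h1w : (1:ℂ) + w ≠ 0 := fun h => hw (by linear_combination h)
        exact norm_pos_iff.mpr h1w
    have hlogb : Tendsto (fun w : ℂ => Real.log (‖1+w‖)) F atBot :=
      Real.tendsto_log_nhdsGT_zero.comp habs
    have hnorm : Tendsto (fun w : ℂ => ‖Complex.log (1+w)‖) F atTop := by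
      apply tendsto_atTop_mono ?_ (tendsto_abs_atBot_atTop.comp hlogb)
      intro w
      calc |Real.log (‖1+w‖)| = |(Complex.log (1+w)).re| := by
            rw [Complex.log_re]
        _ ≤ ‖Complex.log (1+w)‖ := Complex.abs_re_le_norm _
        _ = ‖Complex.log (1+w)‖ := rfl
    have hg : Tendsto (fun w : ℂ => ((Complex.log (1+w))^2)⁻¹) F (𝓝 0) := by
      rw [tendsto_zero_iff_norm_tendsto_zero]
      have h2 : Tendsto (fun w : ℂ => (‖Complex.log (1+w)‖^2)⁻¹) F (𝓝 0) :=
        ((tendsto_pow_atTop two_ne_zero).comp hnorm).inv_tendsto_atTop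
      apply h2.congr
      intro w
      rw [norm_inv, norm_pow]
    have hi2 : Tendsto (fun w : ℂ => (w^2)⁻¹) F (𝓝 1) := by
      have hc : ContinuousAt (fun w : ℂ => (w^2)⁻¹) (-1) :=
        (continuousAt_id.pow 2).inv₀ (by norm_num)
      have := hc.tendsto.mono_left (nhdsWithin_le_nhds (s := Metric.closedBall (0:ℂ) 1 \ {-1}))
      simpa using this
    have hi1 : Tendsto (fun w : ℂ => w⁻¹) F (𝓝 (-1)) := by
      have hc : ContinuousAt (fun w : ℂ => w⁻¹) (-1) := continuousAt_id.inv₀ (by norm_num)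
      have h5 := hc.tendsto.mono_left (nhdsWithin_le_nhds (s := Metric.closedBall (0:ℂ) 1 \ {-1}))
      rwa [show ((-1:ℂ))⁻¹ = -1 by norm_num] at h5
    have hff : Tendsto ffun F (𝓝 0) := by
      have := (hg.sub hi2).sub hi1
      rw [show ((0:ℂ) - 1 - -1) = 0 by ring] at this
      exact this.congr (fun w => rfl)
    have : Tendsto hfun F (𝓝 0) := by
      apply hff.congr'
      filter_upwards [hevne] with w hw
      exact (Function.update_of_ne hw _ _).symm
    rw [ContinuousWithinAt, hval]
    exact this
  · -- generic boundary/interior point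
    have hz1 : ‖z‖ ≤ 1 := mem_closedBall_zero_iff.1 hz
    have h1z : (1:ℂ) + z ≠ 0 := by
      intro h
      exact hm1 (by linear_combination h)
    have hs : 1 + z ∈ Complex.slitPlane := by
      rw [Complex.mem_slitPlane_iff]
      rcases eq_or_ne z.im 0 with him | him
      · left
        have h1 : |z.re| ≤ ‖z‖ := by
          exact Complex.abs_re_le_norm z
        have h2 := (abs_le.1 (h1.trans hz1)).1
        have h3 : z.re ≠ -1 := by
          intro h
          exact hm1 (Complex.ext (by simpa using h) (by simpa using him))
        simp only [Complex.add_re, Complex.one_re]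
        rcases lt_or_eq_of_le h2 with h4 | h4
        · linarith
        · exact absurd h4.symm h3
      · right
        simpa [Complex.add_im] using him
    have hl : Complex.log (1+z) ≠ 0 := log_ne h0 h1z
    have hlog : ContinuousAt (fun w : ℂ => Complex.log (1+w)) z :=
      (continuousAt_const.add continuousAt_id).clog hs
    have hc : ContinuousAt ffun z :=
      (((hlog.pow 2).inv₀ (pow_ne_zero 2 hl)).sub
        ((continuousAt_id.pow 2).inv₀ (pow_ne_zero 2 h0))).sub (continuousAt_id.inv₀ h0)
    exact (hc.congr (hfun_eventuallyEq h0).symm).continuousWithinAt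

lemma hfun_dcc : DiffContOnCl ℂ hfun (Metric.ball 0 1) :=
  ⟨hfun_diffOn, by rw [closure_ball (0:ℂ) one_ne_zero]; exact hfun_contOn⟩

lemma hfun_at_zero : hfun 0 = 1/12 := Function.update_self _ _ _

lemma Hcont : Continuous (fun θ : ℝ => hfun (Complex.exp (θ * Complex.I))) := by
  apply hfun_contOn.comp_continuous
  · exact Complex.continuous_exp.comp (Complex.continuous_ofReal.mul continuous_const)
  · intro θ
    rw [mem_closedBall_zero_iff]
    rw [show ‖Complex.exp (θ * Complex.I)‖ = 1 from by
      exact Complex.norm_exp_ofReal_mul_I θ]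

lemma integral_H :
    ∫ θ in (0:ℝ)..(2*π), hfun (Complex.exp (θ * Complex.I)) = ((π/6 : ℝ) : ℂ) := by
  have hC := hfun_dcc.circleIntegral_sub_inv_smul (Metric.mem_ball_self one_pos)
  rw [hfun_at_zero, circleIntegral] at hC
  simp only [deriv_circleMap, circleMap_zero, Complex.ofReal_one, one_mul, smul_eq_mul, sub_zero] at hC
  have key : ∀ θ : ℝ, Complex.exp (θ * Complex.I) * Complex.I *
      ((Complex.exp (θ * Complex.I))⁻¹ * hfun (Complex.exp (θ * Complex.I)))
      = Complex.I * hfun (Complex.exp (θ * Complex.I)) := by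
    intro θ
    have h := Complex.exp_ne_zero (θ * Complex.I)
    field_simp
  rw [intervalIntegral.integral_congr (g := fun θ : ℝ =>
      Complex.I * hfun (Complex.exp (θ * Complex.I))) (fun θ _ => key θ),
    intervalIntegral.integral_const_mul] at hC
  apply mul_left_cancel₀ Complex.I_ne_zero
  rw [hC]
  push_cast
  ring

lemma rfun_cont : Continuous rfun := by
  unfold rfun
  exact ((Complex.continuous_re.comp Hcont).add Real.continuous_cos).add
    (Real.continuous_cos.comp (continuous_const.mul continuous_id))

lemma integral_cos_two : ∫ θ in (0:ℝ)..(2*π), Real.cos (2*θ) = 0 := by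
  rw [intervalIntegral.integral_comp_mul_left Real.cos (by norm_num : (2:ℝ) ≠ 0)]
  rw [integral_cos]
  rw [show (2:ℝ)*(2*π) = (4:ℕ)*π by push_cast; ring, Real.sin_nat_mul_pi]
  norm_num

lemma integral_rfun : ∫ θ in (0:ℝ)..(2*π), rfun θ = π/6 := by
  unfold rfun
  have hH : IntervalIntegrable (fun θ : ℝ => hfun (Complex.exp (θ * Complex.I)))
      MeasureTheory.volume 0 (2*π) := Hcont.intervalIntegrable _ _
  have h1 : IntervalIntegrable (fun θ : ℝ => (hfun (Complex.exp (θ * Complex.I))).re)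
      MeasureTheory.volume 0 (2*π) := (Complex.continuous_re.comp Hcont).intervalIntegrable _ _
  have h2 : IntervalIntegrable Real.cos MeasureTheory.volume 0 (2*π) :=
    Real.continuous_cos.intervalIntegrable _ _
  have h3 : IntervalIntegrable (fun θ : ℝ => Real.cos (2*θ)) MeasureTheory.volume 0 (2*π) :=
    (Real.continuous_cos.comp (continuous_const.mul continuous_id)).intervalIntegrable _ _
  rw [intervalIntegral.integral_add (h1.add h2) h3, intervalIntegral.integral_add h1 h2]
  have hre : ∫ θ in (0:ℝ)..(2*π), (hfun (Complex.exp (θ * Complex.I))).re = π/6 := by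
    have := Complex.reCLM.intervalIntegral_comp_comm hH
    simp only [Complex.reCLM_apply] at this
    rw [this, integral_H]
    simp
  rw [hre, integral_cos, integral_cos_two, Real.sin_two_pi]
  simp

lemma hfun_conj {z : ℂ} (hre : 0 ≤ 1 + z.re) :
    hfun ((starRingEnd ℂ) z) = (starRingEnd ℂ) (hfun z) := by
  rcases eq_or_ne z 0 with rfl | h0
  · rw [map_zero, hfun_at_zero]
    simp [Complex.ext_iff]
  · have hc0 : (starRingEnd ℂ) z ≠ 0 := by simpa using h0
    rw [hfun, Function.update_of_ne hc0, Function.update_of_ne h0, ffun]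
    have hlog : Complex.log (1 + (starRingEnd ℂ) z) = (starRingEnd ℂ) (Complex.log (1+z)) := by
      rw [show (1:ℂ) + (starRingEnd ℂ) z = (starRingEnd ℂ) (1+z) by rw [map_add, map_one]]
      apply Complex.log_conj
      intro harg
      have h := Complex.arg_eq_pi_iff.1 harg
      have h2 := h.1
      simp only [Complex.add_re, Complex.one_re] at h2
      linarith
    simp only [ffun, hlog]
    simp [map_sub, map_inv₀, map_pow]

lemma rfun_even (θ : ℝ) : rfun (-θ) = rfun θ := by
  unfold rfun
  have hexp : Complex.exp ((-θ : ℝ) * Complex.I) =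
      (starRingEnd ℂ) (Complex.exp (θ * Complex.I)) := by
    rw [← Complex.exp_conj]
    congr 1
    simp [Complex.ext_iff]
  have hre : 0 ≤ 1 + (Complex.exp (θ * Complex.I)).re := by
    rw [Complex.exp_ofReal_mul_I_re]
    linarith [Real.neg_one_le_cos θ]
  rw [hexp, hfun_conj hre, Complex.conj_re, Real.cos_neg,
    show 2*(-θ) = -(2*θ) by ring, Real.cos_neg]

lemma rfun_periodic (θ : ℝ) : rfun (θ + 2*π) = rfun θ := by
  unfold rfun
  have hexp : Complex.exp ((θ + 2*π : ℝ) * Complex.I) = Complex.exp (θ * Complex.I) := by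
    push_cast
    rw [add_mul, Complex.exp_add, Complex.exp_two_pi_mul_I, mul_one]
  rw [hexp, Real.cos_add_two_pi,
    show 2*(θ + 2*π) = 2*θ + 2*π + 2*π by ring, Real.cos_add_two_pi, Real.cos_add_two_pi]

lemma integral_rfun_pi : ∫ θ in (0:ℝ)..π, rfun θ = π/12 := by
  have hint : ∀ a b : ℝ, IntervalIntegrable rfun MeasureTheory.volume a b :=
    fun a b => rfun_cont.intervalIntegrable _ _
  have hsplit : ∫ θ in (0:ℝ)..(2*π), rfun θ
      = (∫ θ in (0:ℝ)..π, rfun θ) + ∫ θ in π..(2*π), rfun θ :=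
    (intervalIntegral.integral_add_adjacent_intervals (hint 0 π) (hint π (2*π))).symm
  have h2 : ∫ θ in (-π)..(0:ℝ), rfun θ = ∫ θ in π..(2*π), rfun θ := by
    have hcomp := intervalIntegral.integral_comp_add_right (a := -π) (b := (0:ℝ)) rfun (2*π)
    rw [show -π + 2*π = π by ring, show (0:ℝ) + 2*π = 2*π by ring] at hcomp
    rw [← hcomp]
    apply intervalIntegral.integral_congr
    intro x _
    exact (rfun_periodic x).symm
  have h3 : ∫ θ in (-π)..(0:ℝ), rfun θ = ∫ θ in (0:ℝ)..π, rfun θ := by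
    have hcomp := intervalIntegral.integral_comp_neg (a := (0:ℝ)) (b := π) rfun
    rw [neg_zero] at hcomp
    rw [← hcomp]
    apply intervalIntegral.integral_congr
    intro x _
    exact rfun_even x
  have h4 := integral_rfun
  rw [hsplit] at h4
  rw [← h2, h3] at h4
  linarith
lemma log_one_add_exp {x : ℝ} (h1 : 0 < x) (h2 : x < π/2) :
    Complex.log (1 + Complex.exp ((2*x : ℝ) * Complex.I))
      = ((Real.log (2*Real.cos x) : ℝ) : ℂ) + (x:ℂ)*Complex.I := by
  have hc : 0 < Real.cos x := Real.cos_pos_of_mem_Ioo ⟨by linarith, h2⟩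
  have hpos : 0 < 2*Real.cos x := by linarith
  have key : (1:ℂ) + Complex.exp ((2*x:ℝ) * Complex.I)
      = Complex.exp (((Real.log (2*Real.cos x) : ℝ) : ℂ) + (x:ℂ)*Complex.I) := by
    rw [Complex.exp_add]
    rw [show Complex.exp (((Real.log (2*Real.cos x) : ℝ) : ℂ)) = ((2*Real.cos x : ℝ) : ℂ) from by
      rw [← Complex.ofReal_exp, Real.exp_log hpos]]
    have hcos : ((2*Real.cos x : ℝ) : ℂ)
        = Complex.exp ((x:ℂ)*Complex.I) + Complex.exp (-(x:ℂ)*Complex.I) := by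
      rw [← Complex.two_cos]
      push_cast
      rfl
    rw [hcos]
    have hh : Complex.exp ((2*x:ℝ) * Complex.I)
        = Complex.exp ((x:ℂ)*Complex.I) * Complex.exp ((x:ℂ)*Complex.I) := by
      rw [← Complex.exp_add]
      push_cast
      ring_nf
    rw [hh, add_mul]
    have hone : Complex.exp (-(x:ℂ)*Complex.I) * Complex.exp ((x:ℂ)*Complex.I) = 1 := by
      rw [← Complex.exp_add,
        show -(x:ℂ)*Complex.I + (x:ℂ)*Complex.I = 0 by ring, Complex.exp_zero]
    rw [hone]
    ring
  rw [key, Complex.log_exp]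
  · simp only [Complex.add_im, Complex.ofReal_im, Complex.mul_im, Complex.ofReal_re,
      Complex.I_im, Complex.I_re, mul_zero, mul_one, zero_add, add_zero]
    linarith [Real.pi_pos]
  · simp only [Complex.add_im, Complex.ofReal_im, Complex.mul_im, Complex.ofReal_re,
      Complex.I_im, Complex.I_re, mul_zero, mul_one, zero_add, add_zero]
    linarith [Real.pi_pos]

lemma re_inv_sq (a b : ℝ) : ((((a:ℂ) + (b:ℂ)*Complex.I)^2)⁻¹).re
    = (a^2 - b^2)/(a^2+b^2)^2 := by
  have hsq : ((a:ℂ) + (b:ℂ)*Complex.I)^2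
      = ((a^2 - b^2 : ℝ):ℂ) + ((2*a*b : ℝ):ℂ)*Complex.I := by
    apply Complex.ext <;>
      simp [pow_two, Complex.mul_re, Complex.mul_im, Complex.add_re, Complex.add_im] <;> ring
  rw [hsq, Complex.inv_re, Complex.normSq_add_mul_I]
  simp only [Complex.add_re, Complex.ofReal_re, Complex.mul_re, Complex.I_re, Complex.I_im,
    Complex.ofReal_im, mul_zero, mul_one, zero_mul, sub_zero, add_zero, zero_sub]
  rw [show (a^2-b^2)^2 + (2*a*b)^2 = (a^2+b^2)^2 by ring]

lemma pointwise {x : ℝ} (h1 : 0 < x) (h2 : x < π/2) :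
    1 / (x ^ 2 + Real.log (2 * Real.cos x) ^ 2)
      - 2 * (x ^ 2 / (x ^ 2 + Real.log (2 * Real.cos x) ^ 2) ^ 2) = rfun (2*x) := by
  have hlog := log_one_add_exp h1 h2
  have hne : Complex.exp ((2*x:ℝ) * Complex.I) ≠ 0 := Complex.exp_ne_zero _
  have hx2 : 0 < x^2 := by positivity
  have hdpos : 0 < x^2 + Real.log (2*Real.cos x)^2 := by
    nlinarith [sq_nonneg (Real.log (2*Real.cos x))]
  unfold rfun
  rw [hfun, Function.update_of_ne hne, ffun, hlog]
  rw [Complex.sub_re, Complex.sub_re, re_inv_sq (Real.log (2*Real.cos x)) x]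
  have e1 : ((Complex.exp ((2*x:ℝ) * Complex.I))⁻¹).re = Real.cos (2*x) := by
    rw [← Complex.exp_neg,
      show -(((2*x:ℝ):ℂ) * Complex.I) = ((-(2*x) : ℝ) : ℂ) * Complex.I by push_cast; ring,
      Complex.exp_ofReal_mul_I_re, Real.cos_neg]
  have e2 : (((Complex.exp ((2*x:ℝ) * Complex.I))^2)⁻¹).re = Real.cos (2*(2*x)) := by
    rw [show (Complex.exp (((2*x:ℝ):ℂ)*Complex.I))^2
        = Complex.exp (((2*(2*x) : ℝ):ℂ) * Complex.I) from by
      rw [sq, ← Complex.exp_add]; push_cast; ring_nf]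
    rw [← Complex.exp_neg,
      show -(((2*(2*x):ℝ):ℂ) * Complex.I) = ((-(2*(2*x)):ℝ):ℂ)*Complex.I by push_cast; ring,
      Complex.exp_ofReal_mul_I_re, Real.cos_neg]
  rw [e1, e2]
  have hdne : (x^2 + Real.log (2*Real.cos x)^2) ≠ 0 := ne_of_gt hdpos
  have hdne2 : (Real.log (2*Real.cos x)^2 + x^2) ≠ 0 := by
    intro h
    exact hdne (by linarith)
  field_simp
  ring

lemma den_lb {x : ℝ} (h0 : 0 ≤ x) (h2 : x ≤ π/2) :
    (1/4:ℝ) ≤ x^2 + Real.log (2*Real.cos x)^2 := by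
  by_cases h : (1/2:ℝ) ≤ x
  · nlinarith [sq_nonneg (Real.log (2*Real.cos x))]
  · push_neg at h
    have hcos : (7/8:ℝ) ≤ Real.cos x := by
      have hb := Real.one_sub_sq_div_two_le_cos (x := x)
      nlinarith
    have hexp : Real.exp (1/2) < 7/4 := by
      have he : Real.exp (1/2) * Real.exp (1/2) = Real.exp 1 := by
        rw [← Real.exp_add]; norm_num
      nlinarith [Real.exp_one_lt_d9, Real.exp_pos (1/2)]
    have hlog : (1/2:ℝ) ≤ Real.log (2*Real.cos x) := by
      rw [Real.le_log_iff_exp_le (by linarith)]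
      linarith
    nlinarith [sq_nonneg x]

lemma meas_f1 : Measurable (fun x : ℝ => 1/(x^2 + Real.log (2*Real.cos x)^2)) := by
  apply Measurable.div measurable_const
  exact (measurable_id.pow_const 2).add
    ((Real.measurable_log.comp (continuous_const.mul Real.continuous_cos).measurable).pow_const 2)

lemma meas_f2 : Measurable (fun x : ℝ => x^2/(x^2 + Real.log (2*Real.cos x)^2)^2) := by
  apply Measurable.div (measurable_id.pow_const 2)
  exact (((measurable_id.pow_const 2).add
    ((Real.measurable_log.comp (continuous_const.mul Real.continuous_cos).measurable).pow_const
      2)).pow_const 2)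

lemma uIoc_eq : Set.uIoc (0:ℝ) (π/2) = Set.Ioc (0:ℝ) (π/2) :=
  Set.uIoc_of_le (by positivity)

lemma int_f1 : IntervalIntegrable (fun x : ℝ => 1/(x^2 + Real.log (2*Real.cos x)^2))
    MeasureTheory.volume 0 (π/2) := by
  rw [intervalIntegrable_iff]
  apply MeasureTheory.Integrable.mono' (g := fun _ : ℝ => (4:ℝ))
  · refine MeasureTheory.integrableOn_const ?_ (by simp)
    rw [uIoc_eq]
    exact measure_Ioc_lt_top.ne
  · exact meas_f1.aestronglyMeasurable
  · rw [MeasureTheory.ae_restrict_iff' measurableSet_uIoc]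
    apply Filter.Eventually.of_forall
    intro x hx
    rw [uIoc_eq] at hx
    have hlb := den_lb (le_of_lt hx.1) hx.2
    have hpos : (0:ℝ) < x^2 + Real.log (2*Real.cos x)^2 := by linarith
    rw [Real.norm_eq_abs, abs_of_nonneg (by positivity)]
    rw [div_le_iff₀ hpos]
    linarith

lemma int_f2 : IntervalIntegrable (fun x : ℝ => x^2/(x^2 + Real.log (2*Real.cos x)^2)^2)
    MeasureTheory.volume 0 (π/2) := by
  rw [intervalIntegrable_iff]
  apply MeasureTheory.Integrable.mono' (g := fun _ : ℝ => (64:ℝ))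
  · refine MeasureTheory.integrableOn_const ?_ (by simp)
    rw [uIoc_eq]
    exact measure_Ioc_lt_top.ne
  · exact meas_f2.aestronglyMeasurable
  · rw [MeasureTheory.ae_restrict_iff' measurableSet_uIoc]
    apply Filter.Eventually.of_forall
    intro x hx
    rw [uIoc_eq] at hx
    have hlb := den_lb (le_of_lt hx.1) hx.2
    have hpos : (0:ℝ) < x^2 + Real.log (2*Real.cos x)^2 := by linarith
    have hx4 : x ≤ 2 := by
      have := Real.pi_le_four
      linarith [hx.2]
    rw [Real.norm_eq_abs, abs_of_nonneg (by positivity)]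
    rw [div_le_iff₀ (by positivity)]
    nlinarith [hx.1.le]

end PC247

/-- `∫_0^{π/2} dx/(x² + ln²(2cos x)) − 2∫_0^{π/2} x²/(x² + ln²(2cos x))² dx = π/24`. -/
theorem integral_sub_integral_eq_pi_div_24 :
    (∫ x in (0:ℝ)..(π/2), 1 / (x ^ 2 + Real.log (2 * Real.cos x) ^ 2)) -
      2 * ∫ x in (0:ℝ)..(π/2),
        x ^ 2 / (x ^ 2 + Real.log (2 * Real.cos x) ^ 2) ^ 2
    = π / 24 := by
  rw [← intervalIntegral.integral_const_mul,
    ← intervalIntegral.integral_sub PC247.int_f1 (PC247.int_f2.const_mul 2)]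
  have hae : ∀ᵐ x ∂(MeasureTheory.volume : MeasureTheory.Measure ℝ),
      x ∈ Set.uIoc (0:ℝ) (π/2) →
      (1 / (x ^ 2 + Real.log (2 * Real.cos x) ^ 2)
        - 2 * (x ^ 2 / (x ^ 2 + Real.log (2 * Real.cos x) ^ 2) ^ 2)) = PC247.rfun (2*x) := by
    have hsing : (MeasureTheory.volume : MeasureTheory.Measure ℝ) {π/2} = 0 :=
      MeasureTheory.measure_singleton _
    have hne : ∀ᵐ x ∂(MeasureTheory.volume : MeasureTheory.Measure ℝ), x ≠ π/2 := by
      rw [MeasureTheory.ae_iff]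
      simpa [Set.setOf_eq_eq_singleton, not_not] using hsing
    filter_upwards [hne] with x hx hmem
    rw [PC247.uIoc_eq] at hmem
    exact PC247.pointwise hmem.1 (lt_of_le_of_ne hmem.2 hx)
  rw [intervalIntegral.integral_congr_ae hae]
  rw [intervalIntegral.integral_comp_mul_left PC247.rfun (by norm_num : (2:ℝ) ≠ 0)]
  rw [show (2:ℝ)*0 = 0 by ring, show (2:ℝ)*(π/2) = π by ring]
  rw [PC247.integral_rfun_pi, smul_eq_mul]
  ring
end

section
/- ∫_0^{π/2} ln(cos x) / (x² + ln²(cos x)) dx = (π/2) · (1 − 1/ln 2). -/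
open Real MeasureTheory Metric Filter Set
open scoped Topology Interval

noncomputable def ggAux (z : ℂ) : ℂ := (Complex.log ((1 + z) / 2))⁻¹
noncomputable def hhAux (z : ℂ) : ℂ := ggAux z - 2 / (z - 1)

lemma reAux {z : ℂ} (hz : ‖z‖ ≤ 1) (hne : z ≠ -1) : -1 < z.re := by
  have h2 : z.re ^ 2 + z.im ^ 2 ≤ 1 := by
    have h := Complex.sq_norm z
    rw [Complex.normSq_apply] at h
    have h1 : ‖z‖ ≤ 1 := hz
    nlinarith [norm_nonneg z]
  rcases lt_or_ge (-1) z.re with h | h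
  · exact h
  · exfalso
    have hre : z.re = -1 := by nlinarith [sq_nonneg z.im]
    have him : z.im = 0 := by nlinarith
    exact hne (Complex.ext (by simp [hre]) (by simp [him]))

lemma re2Aux {z : ℂ} (hre : -1 < z.re) : 0 < ((1 + z) / 2).re := by
  have h : ((1 + z) / 2).re = (1 + z.re) / 2 := by
    simp [Complex.div_re, Complex.normSq_apply]
  rw [h]; linarith

lemma logneAux {z : ℂ} (hre : -1 < z.re) (h1 : z ≠ 1) :
    Complex.log ((1 + z) / 2) ≠ 0 := by
  intro h
  have hw : (1 + z) / 2 ≠ 0 := by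
    intro hw
    have hzm : z = -1 := by linear_combination 2 * hw
    rw [hzm] at hre
    simp at hre
  have h2 := Complex.exp_log hw
  rw [h, Complex.exp_zero] at h2
  exact h1 (by linear_combination -2 * h2)

lemma diffAux {z : ℂ} (hre : -1 < z.re) (h1 : z ≠ 1) : DifferentiableAt ℂ hhAux z := by
  have hslit : (1 + z) / 2 ∈ Complex.slitPlane := Or.inl (re2Aux hre)
  have hinner : DifferentiableAt ℂ (fun z : ℂ => (1 + z) / 2) z :=
    ((differentiableAt_const _).add differentiableAt_id).div_const 2
  have hlog : DifferentiableAt ℂ (fun z : ℂ => Complex.log ((1 + z) / 2)) z :=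
    by have h := (Complex.differentiableAt_log hslit).comp z hinner; exact h
  have h2 : DifferentiableAt ℂ ggAux z := hlog.inv (logneAux hre h1)
  have h3 : DifferentiableAt ℂ (fun z : ℂ => 2 / (z - 1)) z :=
    (differentiableAt_const 2).div (differentiableAt_id.sub_const 1) (sub_ne_zero.mpr h1)
  exact h2.sub h3

lemma hh1Aux : hhAux 1 = 0 := by
  unfold hhAux ggAux
  norm_num [Complex.log_one]

lemma hh0Aux : hhAux 0 = ((2 - (Real.log 2)⁻¹ : ℝ) : ℂ) := by
  unfold hhAux ggAux
  have h : ((1 : ℂ) + 0) / 2 = ((1/2 : ℝ) : ℂ) := by push_cast; ring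
  rw [h, ← Complex.ofReal_log (by norm_num : (0:ℝ) ≤ 1/2)]
  rw [show Real.log (1/2) = -Real.log 2 by rw [one_div, Real.log_inv] ]
  push_cast
  have h2 : Real.log 2 ≠ 0 := ne_of_gt (Real.log_pos (by norm_num))
  field_simp
  ring

lemma stepA {r : ℝ} (hr0 : 0 < r) (hr1 : r < 1) :
    ∫ θ in (0:ℝ)..(2*π), hhAux (circleMap 0 r θ) = ((2*π : ℝ) : ℂ) * hhAux 0 := by
  have hdiff : DifferentiableOn ℂ hhAux (closure (ball (0:ℂ) r)) := by
    rw [closure_ball (0:ℂ) hr0.ne']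
    intro z hz
    have hz1 : ‖z‖ ≤ r := by simpa [mem_closedBall, Complex.dist_eq] using hz
    have hzlt : ‖z‖ < 1 := lt_of_le_of_lt hz1 hr1
    have hre : -1 < z.re := by
      have := Complex.abs_re_le_norm z
      have h2 : |z.re| < 1 := lt_of_le_of_lt this hzlt
      cases abs_lt.mp h2 with
      | intro a b => linarith
    have hne1 : z ≠ 1 := by
      intro h; rw [h] at hzlt; simp at hzlt
    exact (diffAux hre hne1).differentiableWithinAt
  have hdc : DiffContOnCl ℂ hhAux (ball (0:ℂ) r) := hdiff.diffContOnCl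
  have key := hdc.circleIntegral_sub_inv_smul (w := 0) (by simpa using hr0)
  have hconv : (∮ z in C(0, r), (z - 0)⁻¹ • hhAux z)
      = ∫ θ in (0:ℝ)..(2*π), Complex.I * hhAux (circleMap 0 r θ) := by
    simp only [circleIntegral, deriv_circleMap, smul_eq_mul]
    refine intervalIntegral.integral_congr fun θ _ => ?_
    have hne : circleMap 0 r θ ≠ 0 := circleMap_ne_center hr0.ne'
    field_simp
    ring
  rw [hconv, intervalIntegral.integral_const_mul] at key
  apply mul_left_cancel₀ Complex.I_ne_zero
  rw [key, smul_eq_mul]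
  push_cast
  ring

lemma near1Aux {z : ℂ} (h1 : z ≠ 1) (hd : ‖z - 1‖ ≤ 1/2) : ‖hhAux z‖ ≤ 2 := by
  set w : ℂ := (z - 1) / 2 with hwdef
  have hwnorm : ‖w‖ ≤ 1/4 := by
    rw [hwdef, norm_div]
    simp only [Complex.norm_ofNat]
    linarith
  have hw0 : w ≠ 0 := by
    rw [hwdef]
    exact div_ne_zero (sub_ne_zero.mpr h1) two_ne_zero
  have hwpos : 0 < ‖w‖ := norm_pos_iff.mpr hw0
  set L : ℂ := Complex.log (1 + w) with hLdef
  have hE : ‖L - w‖ ≤ ‖w‖ ^ 2 * (1 - ‖w‖)⁻¹ / 2 :=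
    Complex.norm_log_one_add_sub_self_le (lt_of_le_of_lt hwnorm (by norm_num))
  have hinv : (1 - ‖w‖)⁻¹ ≤ 4/3 := by
    rw [inv_le_comm₀ (by linarith) (by norm_num)]
    linarith
  have hE2 : ‖L - w‖ ≤ 2/3 * ‖w‖ ^ 2 := by
    have h0 : (0:ℝ) ≤ ‖w‖ ^ 2 := sq_nonneg _
    nlinarith [hE, mul_le_mul_of_nonneg_left hinv h0]
  have hL : 5/6 * ‖w‖ ≤ ‖L‖ := by
    have h := norm_sub_norm_le w L
    rw [norm_sub_rev] at h
    nlinarith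
  have hL0 : L ≠ 0 := by
    intro h
    rw [h, norm_zero] at hL
    nlinarith
  have heq : hhAux z = (w - L) / (L * w) := by
    unfold hhAux ggAux
    have h1z : (1 + z) / 2 = 1 + w := by rw [hwdef]; ring
    have hz1 : z - 1 = 2 * w := by rw [hwdef]; ring
    rw [h1z, hz1, ← hLdef]
    field_simp
  rw [heq, norm_div, norm_mul, norm_sub_rev]
  have hden : 5/6 * ‖w‖ * ‖w‖ ≤ ‖L‖ * ‖w‖ :=
    mul_le_mul_of_nonneg_right hL (norm_nonneg w)
  have hfrac : ‖L - w‖ / (‖L‖ * ‖w‖) ≤ (2/3 * ‖w‖ ^ 2) / (5/6 * ‖w‖ * ‖w‖) :=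
    div_le_div₀ (by positivity) hE2 (by positivity) hden
  have heval : ∀ n : ℝ, 0 < n → (2/3 * n ^ 2) / (5/6 * n * n) = 4/5 := by
    intro n hn
    field_simp
    ring
  rw [heval _ hwpos] at hfrac
  linarith

lemma nearm1Aux {z : ℂ} (hd : ‖z + 1‖ ≤ 1/2) : ‖hhAux z‖ ≤ 3 := by
  have hg : ‖ggAux z‖ ≤ 1 := by
    unfold ggAux
    set w : ℂ := (1 + z) / 2 with hwdef
    have hwnorm : ‖w‖ ≤ 1/4 := by
      rw [hwdef, norm_div]
      simp only [Complex.norm_ofNat]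
      rw [show (1 : ℂ) + z = z + 1 by ring]
      linarith
    rcases eq_or_ne w 0 with h | h
    · simp [h]
    · rw [norm_inv]
      have h2 : 0 < ‖w‖ := norm_pos_iff.mpr h
      have h3 : Real.log ‖w‖ ≤ Real.log (1/4) :=
        Real.log_le_log h2 (by exact_mod_cast hwnorm)
      have h4 : Real.log (1/4) ≤ -1 := by
        rw [show (1/4 : ℝ) = 4⁻¹ by norm_num, Real.log_inv]
        have h5 : (1:ℝ) ≤ Real.log 4 := by
          rw [Real.le_log_iff_exp_le (by norm_num)]
          exact le_trans Real.exp_one_lt_d9.le (by norm_num)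
        linarith
      have h5 : 1 ≤ |(Complex.log w).re| := by
        rw [Complex.log_re]
        exact le_abs.mpr (Or.inr (by linarith))
      have h6 : 1 ≤ ‖Complex.log w‖ := le_trans h5 (Complex.abs_re_le_norm _)
      calc ‖Complex.log w‖⁻¹ ≤ 1⁻¹ :=
            inv_anti₀ one_pos h6
        _ = 1 := inv_one
  have hz1 : (3/2 : ℝ) ≤ ‖z - 1‖ := by
    have h := norm_sub_norm_le ((2:ℂ)) (z + 1)
    have h2 : ‖(2:ℂ)‖ = 2 := by simp
    have h3 : (2:ℂ) - (z + 1) = -(z - 1) := by ring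
    rw [h3, norm_neg, h2] at h
    linarith
  have h2 : ‖(2:ℂ) / (z - 1)‖ ≤ 4/3 := by
    rw [norm_div]
    have h4 : ‖(2:ℂ)‖ = 2 := by simp
    rw [h4, div_le_iff₀ (by linarith)]
    linarith
  calc ‖hhAux z‖ ≤ ‖ggAux z‖ + ‖(2:ℂ) / (z - 1)‖ := norm_sub_le _ _
    _ ≤ 3 := by linarith

lemma measAux : Measurable hhAux := by
  unfold hhAux ggAux
  apply Measurable.sub
  · exact (Complex.measurable_log.comp
      (((continuous_const.add continuous_id).div_const 2).measurable)).inv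
  · have h : (fun z : ℂ => 2 / (z - 1)) = fun z : ℂ => 2 * (z - 1)⁻¹ := by
      funext z; rw [div_eq_mul_inv]
    rw [h]
    exact (measurable_id.sub_const 1).inv.const_mul (2:ℂ)

lemma boundAux : ∃ M : ℝ, ∀ z : ℂ, ‖z‖ ≤ 1 → ‖hhAux z‖ ≤ M := by
  set K : Set ℂ := closedBall 0 1 \ (ball 1 (1/2) ∪ ball (-1) (1/2)) with hK
  have hcomp : IsCompact K :=
    (isCompact_closedBall 0 1).diff (isOpen_ball.union isOpen_ball)
  have hcont : ContinuousOn hhAux K := by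
    intro z hz
    obtain ⟨hz1, hz2⟩ := hz
    rw [mem_union, not_or] at hz2
    obtain ⟨hzb1, hzb2⟩ := hz2
    have hznorm : ‖z‖ ≤ 1 := by simpa [Complex.dist_eq] using hz1
    have hne1 : z ≠ 1 := by
      intro h; apply hzb1; rw [h]; exact mem_ball_self (by norm_num)
    have hnem1 : z ≠ -1 := by
      intro h; apply hzb2; rw [h]; exact mem_ball_self (by norm_num)
    exact ((diffAux (reAux hznorm hnem1) hne1).continuousAt).continuousWithinAt
  obtain ⟨C, hC⟩ := hcomp.exists_bound_of_continuousOn hcont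
  refine ⟨max C 3, fun z hz => ?_⟩
  rcases eq_or_ne z 1 with h1 | h1
  · rw [h1, hh1Aux, norm_zero]
    exact le_trans (by norm_num) (le_max_right C 3)
  by_cases hb1 : z ∈ ball (1:ℂ) (1/2)
  · have : ‖z - 1‖ ≤ 1/2 := by
      rw [mem_ball, Complex.dist_eq] at hb1
      exact le_of_lt hb1
    exact le_trans (near1Aux h1 this) (le_trans (by norm_num) (le_max_right C 3))
  by_cases hb2 : z ∈ ball (-1:ℂ) (1/2)
  · have : ‖z + 1‖ ≤ 1/2 := by
      rw [mem_ball, Complex.dist_eq] at hb2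
      simpa [sub_neg_eq_add] using le_of_lt hb2
    exact le_trans (nearm1Aux this) (le_max_right C 3)
  · have hzK : z ∈ K := by
      refine ⟨by simpa [Complex.dist_eq] using hz, ?_⟩
      rw [mem_union]
      tauto
    exact le_trans (hC z hzK) (le_max_left C 3)

lemma angleAux {θ : ℝ} (h0 : 0 < θ) (h2 : θ < 2*π) (hπ : θ ≠ π) :
    circleMap 0 1 θ ≠ 1 ∧ circleMap 0 1 θ ≠ -1 := by
  have hcm : circleMap 0 1 θ = Complex.exp (θ * Complex.I) := by
    simp [circleMap]
  constructor
  · rw [hcm]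
    intro h
    obtain ⟨n, hn⟩ := Complex.exp_eq_one_iff.mp h
    have hθ : θ = n * (2 * π) := by
      have := congrArg Complex.im hn
      simpa [Complex.mul_I_im] using this
    have hn0 : (0:ℝ) < n * (2*π) := hθ ▸ h0
    have hn2 : n * (2*π) < 2*π := hθ ▸ h2
    have hpi := Real.pi_pos
    have hn0' : 0 < (n:ℝ) := by nlinarith
    have hn1' : (n:ℝ) < 1 := by nlinarith
    have : (0:ℤ) < n := by exact_mod_cast hn0'
    have : (n:ℤ) < 1 := by exact_mod_cast hn1'
    omega
  · rw [hcm]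
    intro h
    have hsq : Complex.exp ((2*θ : ℝ) * Complex.I) = 1 := by
      rw [show ((2*θ : ℝ) : ℂ) * Complex.I = θ * Complex.I + θ * Complex.I by push_cast; ring,
        Complex.exp_add, h]
      norm_num
    obtain ⟨n, hn⟩ := Complex.exp_eq_one_iff.mp hsq
    have hθ : 2*θ = n * (2 * π) := by
      have := congrArg Complex.im hn
      simpa [Complex.mul_I_im] using this
    have hpi := Real.pi_pos
    have hn0' : 0 < (n:ℝ) := by nlinarith
    have hn1' : (n:ℝ) < 2 := by nlinarith
    have h1 : (0:ℤ) < n := by exact_mod_cast hn0'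
    have h2' : (n:ℤ) < 2 := by exact_mod_cast hn1'
    have : n = 1 := by omega
    rw [this] at hθ
    push_cast at hθ
    exact hπ (by linarith)

lemma normCircleAux (r θ : ℝ) : ‖circleMap 0 r θ‖ = |r| := by
  simp [circleMap, abs_of_nonneg]

lemma intBoundaryAux : IntervalIntegrable (fun θ => hhAux (circleMap 0 1 θ)) volume 0 (2*π) := by
  obtain ⟨M, hM⟩ := boundAux
  apply IntervalIntegrable.mono_fun' (g := fun _ => M) intervalIntegrable_const
  · exact ((measAux.comp (continuous_circleMap 0 1).measurable).aestronglyMeasurable).restrict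
  · filter_upwards with θ
    exact hM _ (by rw [normCircleAux]; norm_num)

lemma aeNeAux (c : ℝ) : ∀ᵐ θ : ℝ ∂volume, θ ≠ c := by
  simpa [ae_iff, not_not, Set.setOf_eq_eq_singleton] using measure_singleton (c : ℝ)

lemma stepBAux : ∫ θ in (0:ℝ)..(2*π), hhAux (circleMap 0 1 θ) = ((2*π : ℝ) : ℂ) * hhAux 0 := by
  obtain ⟨M, hM⟩ := boundAux
  have hIoo : Ioo (0:ℝ) 1 ∈ 𝓝[<] (1:ℝ) :=
    Ioo_mem_nhdsLT_of_mem (by constructor <;> norm_num)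
  have hmeas : ∀ᶠ r in 𝓝[<] (1:ℝ),
      AEStronglyMeasurable (fun θ => hhAux (circleMap 0 r θ)) (volume.restrict (Ι 0 (2*π))) :=
    Eventually.of_forall fun r =>
      ((measAux.comp (continuous_circleMap 0 r).measurable).aestronglyMeasurable).restrict
  have hbound : ∀ᶠ r in 𝓝[<] (1:ℝ), ∀ᵐ θ ∂volume, θ ∈ Ι 0 (2*π) →
      ‖hhAux (circleMap 0 r θ)‖ ≤ M := by
    filter_upwards [hIoo] with r hr
    filter_upwards with θ _
    apply hM
    rw [normCircleAux, abs_of_pos hr.1]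
    exact hr.2.le
  have hlim : ∀ᵐ θ ∂volume, θ ∈ Ι 0 (2*π) →
      Tendsto (fun r => hhAux (circleMap 0 r θ)) (𝓝[<] (1:ℝ)) (𝓝 (hhAux (circleMap 0 1 θ))) := by
    filter_upwards [aeNeAux π, aeNeAux (2*π)] with θ hθπ hθ2π hmem
    rw [uIoc_of_le (by positivity)] at hmem
    obtain ⟨hθ0, hθle⟩ := hmem
    have hθlt : θ < 2*π := lt_of_le_of_ne hθle hθ2π
    obtain ⟨hne1, hnem1⟩ := angleAux hθ0 hθlt hθπ
    have hnorm : ‖circleMap 0 1 θ‖ ≤ 1 := by rw [normCircleAux]; norm_num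
    have hcont : ContinuousAt hhAux (circleMap 0 1 θ) :=
      (diffAux (reAux hnorm hnem1) hne1).continuousAt
    have hmap : ContinuousAt (fun r : ℝ => circleMap 0 r θ) 1 := by
      simp only [circleMap]
      fun_prop
    exact (Tendsto.comp hcont.tendsto hmap.tendsto).mono_left nhdsWithin_le_nhds
  have hDCT := intervalIntegral.tendsto_integral_filter_of_dominated_convergence
    (μ := volume) (F := fun r θ => hhAux (circleMap 0 r θ))
    (f := fun θ => hhAux (circleMap 0 1 θ)) (bound := fun _ => M)
    hmeas hbound intervalIntegrable_const hlim
  have hconst : Tendsto (fun r : ℝ => ∫ θ in (0:ℝ)..(2*π), hhAux (circleMap 0 r θ)) (𝓝[<] 1)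
      (𝓝 (((2*π : ℝ) : ℂ) * hhAux 0)) := by
    apply Tendsto.congr' ?_ tendsto_const_nhds
    filter_upwards [hIoo] with r hr
    exact (stepA hr.1 hr.2).symm
  exact tendsto_nhds_unique hDCT hconst

noncomputable def iiAux (x : ℝ) : ℝ :=
  Real.log (Real.cos x) / (x ^ 2 + Real.log (Real.cos x) ^ 2)

lemma klogAux {ρ x : ℝ} (hρ : 0 < ρ) (h1 : -π < x) (h2 : x ≤ π) :
    Complex.log ((ρ : ℂ) * Complex.exp ((x : ℂ) * Complex.I))
      = (Real.log ρ : ℂ) + (x : ℂ) * Complex.I := by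
  have h3 : (ρ:ℂ) * Complex.exp ((x:ℂ) * Complex.I)
      = Complex.exp ((Real.log ρ : ℂ) + (x:ℂ) * Complex.I) := by
    rw [Complex.exp_add, ← Complex.ofReal_exp, Real.exp_log hρ]
  rw [h3, Complex.log_exp (by simpa using h1) (by simpa using h2)]

lemma kzAux (θ : ℝ) : (1 + Complex.exp ((θ:ℂ) * Complex.I)) / 2
    = (Real.cos (θ/2) : ℂ) * Complex.exp (((θ/2 : ℝ) : ℂ) * Complex.I) := by
  have h : (θ:ℂ) = 2 * ((θ/2 : ℝ) : ℂ) := by push_cast; ring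
  rw [Complex.ofReal_cos, h]
  set x : ℂ := ((θ/2 : ℝ) : ℂ)
  rw [Complex.exp_mul_I, Complex.exp_mul_I, Complex.cos_two_mul, Complex.sin_two_mul]
  ring

lemma reDivAux {θ : ℝ} (h0 : 0 < θ) (h2 : θ < 2*π) :
    ((2:ℂ) / (circleMap 0 1 θ - 1)).re = -1 := by
  have hs : 0 < Real.sin (θ/2) :=
    Real.sin_pos_of_pos_of_lt_pi (by linarith) (by linarith)
  have hcsq := Real.cos_sq (θ/2)
  rw [show 2*(θ/2) = θ by ring] at hcsq
  have hpyth := Real.sin_sq_add_cos_sq (θ/2)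
  have hc : Real.cos θ < 1 := by nlinarith
  have hzre : (circleMap 0 1 θ).re = Real.cos θ := by
    simp [circleMap, Complex.exp_ofReal_mul_I_re]
  have hzim : (circleMap 0 1 θ).im = Real.sin θ := by
    simp [circleMap, Complex.exp_ofReal_mul_I_im]
  rw [Complex.div_re, Complex.normSq_apply]
  simp only [Complex.sub_re, Complex.sub_im, Complex.one_re, Complex.one_im, hzre, hzim]
  norm_num
  rw [div_eq_iff (by nlinarith [Real.sin_sq_add_cos_sq θ])]
  nlinarith [Real.sin_sq_add_cos_sq θ]

lemma e1Aux {θ : ℝ} (h0 : 0 < θ) (h2 : θ < π) :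
    (hhAux (circleMap 0 1 θ)).re = iiAux (θ/2) + 1 := by
  have hpi := Real.pi_pos
  have hcm : circleMap 0 1 θ = Complex.exp ((θ:ℂ) * Complex.I) := by simp [circleMap]
  have hcos : 0 < Real.cos (θ/2) :=
    Real.cos_pos_of_mem_Ioo ⟨by linarith, by linarith⟩
  have hlog : Complex.log ((1 + Complex.exp ((θ:ℂ) * Complex.I)) / 2)
      = (Real.log (Real.cos (θ/2)) : ℂ) + ((θ/2 : ℝ) : ℂ) * Complex.I := by
    rw [kzAux θ]
    exact klogAux hcos (by linarith) (by linarith)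
  have hre : (ggAux (circleMap 0 1 θ)).re
      = Real.log (Real.cos (θ/2)) / ((θ/2)^2 + Real.log (Real.cos (θ/2))^2) := by
    unfold ggAux
    rw [hcm, hlog, Complex.inv_re, Complex.normSq_apply]
    simp
    ring_nf
  have hdiv := reDivAux h0 (by linarith)
  unfold hhAux
  rw [Complex.sub_re, hre, hdiv]
  unfold iiAux
  ring

lemma e2Aux {θ : ℝ} (h0 : π < θ) (h2 : θ < 2*π) :
    (hhAux (circleMap 0 1 θ)).re = iiAux (π - θ/2) + 1 := by
  have hpi := Real.pi_pos
  have hcm : circleMap 0 1 θ = Complex.exp ((θ:ℂ) * Complex.I) := by simp [circleMap]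
  have hcosneg : Real.cos (θ/2) < 0 :=
    Real.cos_neg_of_pi_div_two_lt_of_lt (by linarith) (by linarith)
  have hkey : (1 + Complex.exp ((θ:ℂ) * Complex.I)) / 2
      = ((-Real.cos (θ/2) : ℝ) : ℂ) * Complex.exp (((θ/2 - π : ℝ) : ℂ) * Complex.I) := by
    rw [kzAux θ]
    have hsplit : (((θ/2 - π : ℝ):ℂ) * Complex.I)
        = ((θ/2:ℝ):ℂ) * Complex.I + (-(π:ℂ)) * Complex.I := by push_cast; ring
    rw [hsplit, Complex.exp_add]
    have hexp : Complex.exp ((-(π:ℂ)) * Complex.I) = -1 := by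
      rw [show (-(π:ℂ)) * Complex.I = -((π:ℂ) * Complex.I) by ring, Complex.exp_neg,
        Complex.exp_pi_mul_I]
      norm_num
    rw [hexp]
    push_cast
    ring
  have hlog : Complex.log ((1 + Complex.exp ((θ:ℂ) * Complex.I)) / 2)
      = (Real.log (-Real.cos (θ/2)) : ℂ) + ((θ/2 - π : ℝ) : ℂ) * Complex.I := by
    rw [hkey]
    exact klogAux (by linarith) (by linarith) (by linarith)
  have hre : (ggAux (circleMap 0 1 θ)).re
      = Real.log (-Real.cos (θ/2)) / ((θ/2 - π)^2 + Real.log (-Real.cos (θ/2))^2) := by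
    unfold ggAux
    rw [hcm, hlog, Complex.inv_re, Complex.normSq_apply]
    simp
    ring_nf
  have hdiv := reDivAux (by linarith) h2
  unfold hhAux
  rw [Complex.sub_re, hre, hdiv]
  unfold iiAux
  rw [Real.cos_pi_sub]
  rw [show (π - θ/2)^2 = (θ/2 - π)^2 by ring]
  ring

lemma reIntAux : IntervalIntegrable (fun θ => (hhAux (circleMap 0 1 θ)).re) volume 0 (2*π) := by
  have h := intBoundaryAux
  rw [intervalIntegrable_iff] at h ⊢
  simpa [IntegrableOn] using h.re

lemma reEqAux : ∫ θ in (0:ℝ)..(2*π), (hhAux (circleMap 0 1 θ)).re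
    = 2*π*(2 - (Real.log 2)⁻¹) := by
  have h := Complex.reCLM.intervalIntegral_comp_comm intBoundaryAux
  simp only [Complex.reCLM_apply] at h
  rw [h, stepBAux, hh0Aux, ← Complex.ofReal_mul, Complex.ofReal_re]

lemma halfIntAux :
    IntervalIntegrable iiAux volume 0 (π/2) ∧
      ∫ θ in (0:ℝ)..π, (hhAux (circleMap 0 1 θ)).re
        = 2 * ∫ u in (0:ℝ)..(π/2), (iiAux u + 1) := by
  have hpi := Real.pi_pos
  have hsub1 : IntervalIntegrable (fun θ => (hhAux (circleMap 0 1 θ)).re) volume 0 π := by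
    apply reIntAux.mono_set
    rw [uIcc_of_le hpi.le, uIcc_of_le (by linarith)]
    exact Icc_subset_Icc le_rfl (by linarith)
  have hae : ∀ᵐ θ ∂volume, θ ∈ Ι (0:ℝ) π →
      (hhAux (circleMap 0 1 θ)).re = (fun u => iiAux u + 1) (θ/2) := by
    filter_upwards [aeNeAux π] with θ hθ hmem
    rw [uIoc_of_le hpi.le] at hmem
    exact e1Aux hmem.1 (lt_of_le_of_ne hmem.2 hθ)
  have he1 : ∫ θ in (0:ℝ)..π, (hhAux (circleMap 0 1 θ)).re
      = ∫ θ in (0:ℝ)..π, (fun u => iiAux u + 1) (θ/2) :=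
    intervalIntegral.integral_congr_ae hae
  have he2 : ∫ θ in (0:ℝ)..π, (fun u => iiAux u + 1) (θ/2)
      = 2 * ∫ u in (0:ℝ)..(π/2), (iiAux u + 1) := by
    rw [intervalIntegral.integral_comp_div (f := fun u => iiAux u + 1) (by norm_num : (2:ℝ) ≠ 0)]
    norm_num
  constructor
  · have hint1 : IntervalIntegrable (fun θ => (fun u => iiAux u + 1) (θ/2)) volume 0 π :=
      hsub1.congr_ae ((ae_restrict_iff' measurableSet_uIoc).mpr hae)
    have hint2 : IntervalIntegrable (fun u => iiAux u + 1) volume 0 (π/2) := by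
      rw [← IntervalIntegrable.comp_mul_left_iff (c := (2:ℝ)⁻¹) (by norm_num)]
      rw [show (0:ℝ) / (2:ℝ)⁻¹ = 0 by ring, show (π/2) / (2:ℝ)⁻¹ = π by ring]
      simpa only [inv_mul_eq_div] using hint1
    have := hint2.sub (intervalIntegrable_const (c := (1:ℝ)))
    apply this.congr_ae
    filter_upwards with x
    simp
  · rw [he1, he2]

noncomputable def ffAux (x : ℝ) : ℝ := iiAux x + 1

lemma secondHalfAux :
    ∫ θ in π..(2*π), (hhAux (circleMap 0 1 θ)).re
      = 2 * ∫ u in (0:ℝ)..(π/2), (iiAux u + 1) := by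
  have hpi := Real.pi_pos
  have hae : ∀ᵐ θ ∂volume, θ ∈ Ι π (2*π) →
      (hhAux (circleMap 0 1 θ)).re = (fun u => ffAux (π - u)) (θ/2) := by
    filter_upwards [aeNeAux (2*π)] with θ hθ hmem
    rw [uIoc_of_le (by linarith)] at hmem
    have := e2Aux hmem.1 (lt_of_le_of_ne hmem.2 hθ)
    simpa [ffAux] using this
  rw [intervalIntegral.integral_congr_ae hae]
  rw [intervalIntegral.integral_comp_div (f := fun u => ffAux (π - u))
    (by norm_num : (2:ℝ) ≠ 0)]
  rw [show (2*π)/2 = π by ring, show π/(2:ℝ) = π/2 by ring]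
  rw [intervalIntegral.integral_comp_sub_left ffAux π]
  rw [show π - π = 0 by ring, show π - π/2 = π/2 by ring]
  rw [smul_eq_mul]
  congr 1

/-- `∫_0^{π/2} ln(cos x)/(x² + ln²(cos x)) dx = (π/2)(1 − 1/ln 2)`. -/
theorem integral_log_cos_div :
    ∫ x in (0:ℝ)..(π/2),
        Real.log (Real.cos x) / (x ^ 2 + Real.log (Real.cos x) ^ 2)
    = (π / 2) * (1 - 1 / Real.log 2) := by
  have hpi := Real.pi_pos
  obtain ⟨hii, hfirst⟩ := halfIntAux
  have hsub1 : IntervalIntegrable (fun θ => (hhAux (circleMap 0 1 θ)).re) volume 0 π := by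
    apply reIntAux.mono_set
    rw [uIcc_of_le hpi.le, uIcc_of_le (by linarith)]
    exact Icc_subset_Icc le_rfl (by linarith)
  have hsub2 : IntervalIntegrable (fun θ => (hhAux (circleMap 0 1 θ)).re) volume π (2*π) := by
    apply reIntAux.mono_set
    rw [uIcc_of_le (by linarith), uIcc_of_le (by linarith)]
    exact Icc_subset_Icc hpi.le le_rfl
  have hsplit := intervalIntegral.integral_add_adjacent_intervals hsub1 hsub2
  rw [hfirst, secondHalfAux, reEqAux] at hsplit
  have hS : ∫ u in (0:ℝ)..(π/2), (iiAux u + 1)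
      = (∫ u in (0:ℝ)..(π/2), iiAux u) + π/2 := by
    rw [intervalIntegral.integral_add hii intervalIntegrable_const]
    simp
  rw [hS] at hsplit
  have hgoal : ∫ u in (0:ℝ)..(π/2), iiAux u = (π/2) * (1 - 1/Real.log 2) := by
    rw [one_div]
    nlinarith [hsplit]
  simpa [iiAux] using hgoal
end
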